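/- Let ξ < 2, a₀ > 0, β ∈ ℝ, and set b₀ = β a₀ and α = β - ξ. Define, for r > 0 and t > 0, P(r,t) = t^{-(α+1)/(2-ξ)} · r^{α} · exp( - r^{2-ξ} / ((2-ξ)² a₀ t) ). Then P solves the forward Kolmogorov equation of the two-particle distance process: for all r > 0, t > 0, ∂P/∂t (r,t) = ∂²/∂r² ( a₀ r^ξ P(r,t) ) - ∂/∂r ( b₀ r^{ξ-1} P(r,t) ). In particular the two-particle transition density in the scale-invariant Kraichnan model behaves like C ρ^{α} |s|^{-(α+1)/(2-ξ)} at large times, the decay estimate underlying the one force–one solution principle in the limit of infinite velocity correlation length. -/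

import Mathlib

open Filter

lemma phiDeriv (C m g p q : ℝ) {x : ℝ} (hx : 0 < x) (hp : p = g - 1) (hq : q = g + m - 1) :
    HasDerivAt (fun ρ : ℝ => ρ ^ g * Real.exp (-C * ρ ^ m))
      ((g * x ^ p - C * m * x ^ q) * Real.exp (-C * x ^ m)) x := by
  have h1 : HasDerivAt (fun ρ : ℝ => ρ ^ g) (g * x ^ (g - 1)) x :=
    Real.hasDerivAt_rpow_const (Or.inl hx.ne')
  have h2 : HasDerivAt (fun ρ : ℝ => ρ ^ m) (m * x ^ (m - 1)) x :=
    Real.hasDerivAt_rpow_const (Or.inl hx.ne')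
  have h4 := h1.mul ((h2.const_mul (-C)).exp)
  refine h4.congr_deriv ?_
  rw [hp, hq, show g + m - 1 = g + (m - 1) by ring, Real.rpow_add hx]
  ring

lemma deriv_aux (S g C m : ℝ) (f : ℝ → ℝ) {r : ℝ} (hr : 0 < r)
    (hf : ∀ ρ : ℝ, 0 < ρ → f ρ = S * (ρ ^ g * Real.exp (-C * ρ ^ m)))
    (p q : ℝ) (hp : p = g - 1) (hq : q = g + m - 1) :
    deriv f r = S * ((g * r ^ p - C * m * r ^ q) * Real.exp (-C * r ^ m)) := by
  have hev : f =ᶠ[nhds r] fun ρ => S * (ρ ^ g * Real.exp (-C * ρ ^ m)) :=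
    (eventually_gt_nhds hr).mono (fun ρ hρ => hf ρ hρ)
  rw [hev.deriv_eq, ((phiDeriv C m g p q hr hp hq).const_mul S).deriv]

lemma deriv2_aux (S g C m : ℝ) (f : ℝ → ℝ) {r : ℝ} (hr : 0 < r)
    (hf : ∀ ρ : ℝ, 0 < ρ → f ρ = S * (ρ ^ g * Real.exp (-C * ρ ^ m)))
    (p1 q1 p2 q2 p3 q3 : ℝ) (hp1 : p1 = g - 1) (hq1 : q1 = g + m - 1)
    (hp2 : p2 = p1 - 1) (hq2 : q2 = p1 + m - 1)
    (hp3 : p3 = q1 - 1) (hq3 : q3 = q1 + m - 1) :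
    deriv (deriv f) r =
      S * g * ((p1 * r ^ p2 - C * m * r ^ q2) * Real.exp (-C * r ^ m))
      - S * (C * m) * ((q1 * r ^ p3 - C * m * r ^ q3) * Real.exp (-C * r ^ m)) := by
  have hder : deriv f =ᶠ[nhds r] fun ρ =>
      (S * g) * (ρ ^ p1 * Real.exp (-C * ρ ^ m))
        - (S * (C * m)) * (ρ ^ q1 * Real.exp (-C * ρ ^ m)) :=
    (eventually_gt_nhds hr).mono (fun ρ hρ => by
      rw [deriv_aux S g C m f hρ hf p1 q1 hp1 hq1]; ring)
  rw [hder.deriv_eq]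
  have h1 := (phiDeriv C m p1 p2 q2 hr hp2 hq2).const_mul (S * g)
  have h2 := (phiDeriv C m q1 p3 q3 hr hp3 hq3).const_mul (S * (C * m))
  exact (h1.sub h2).deriv

set_option maxHeartbeats 2000000 in
/-- For `ξ < 2`, `a₀ > 0`, `b₀ = β a₀` and `α = β - ξ`, the
function `P(r,t) = t^(-(α+1)/(2-ξ)) · r^α · exp(-r^(2-ξ)/((2-ξ)² a₀ t))` solves
the forward Kolmogorov equation of the two-particle distance process:
`∂P/∂t = ∂²/∂r²(a₀ r^ξ P) - ∂/∂r(b₀ r^(ξ-1) P)` for all `r > 0, t > 0`. This is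
the self-similar transition density `C ρ^α |s|^(-(α+1)/(2-ξ))` underlying the one
force–one solution principle at infinite velocity correlation length. -/
theorem kraichnan_selfsimilar_transition_density
    (ξ a₀ β b₀ α : ℝ) (hξ : ξ < 2) (ha₀ : 0 < a₀)
    (hb₀ : b₀ = β * a₀) (hα : α = β - ξ)
    (P : ℝ → ℝ → ℝ)
    (hP : P = fun r t =>
      t ^ (-(α + 1) / (2 - ξ)) * r ^ α *
        Real.exp (-(r ^ (2 - ξ)) / ((2 - ξ) ^ 2 * a₀ * t))) :
    ∀ r t : ℝ, 0 < r → 0 < t →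
      deriv (fun s : ℝ => P r s) t
        = deriv (deriv (fun ρ : ℝ => a₀ * ρ ^ ξ * P ρ t)) r
          - deriv (fun ρ : ℝ => b₀ * ρ ^ (ξ - 1) * P ρ t) r := by
  subst hP hb₀ hα
  intro r t hr ht
  have hm : (0:ℝ) < 2 - ξ := by linarith
  have hm' : (2:ℝ) - ξ ≠ 0 := hm.ne'
  set c : ℝ := -(β - ξ + 1) / (2 - ξ) with hc
  set K : ℝ := (2 - ξ) ^ 2 * a₀ with hK
  have hKpos : 0 < K := mul_pos (pow_pos hm 2) ha₀
  have hKt : K * t ≠ 0 := (mul_pos hKpos ht).ne'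
  set C : ℝ := (K * t)⁻¹ with hC
  have hEarg : ∀ x : ℝ, -(x) / (K * t) = -C * x := by
    intro x; rw [hC]; ring
  -- time derivative
  have hT : HasDerivAt (fun s : ℝ => s ^ c * r ^ (β - ξ) *
      Real.exp (-(r ^ (2 - ξ)) / (K * s)))
      ((c * t ^ (c - 1) * r ^ (β - ξ)) * Real.exp (-(r ^ (2 - ξ)) / (K * t))
        + (t ^ c * r ^ (β - ξ)) * (Real.exp (-(r ^ (2 - ξ)) / (K * t)) *
          ((0 * (K * t) - -(r ^ (2 - ξ)) * (K * 1)) / (K * t) ^ 2))) t := by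
    have h1 : HasDerivAt (fun s : ℝ => s ^ c * r ^ (β - ξ))
        (c * t ^ (c - 1) * r ^ (β - ξ)) t :=
      (Real.hasDerivAt_rpow_const (Or.inl ht.ne')).mul_const _
    have h2 : HasDerivAt (fun s : ℝ => -(r ^ (2 - ξ)) / (K * s))
        ((0 * (K * t) - -(r ^ (2 - ξ)) * (K * 1)) / (K * t) ^ 2) t :=
      (hasDerivAt_const t (-(r ^ (2 - ξ)))).div ((hasDerivAt_id t).const_mul K) hKt
    exact h1.mul h2.exp
  have hLHS := hT.deriv
  -- spatial part, second derivative term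
  have hfg : ∀ ρ : ℝ, 0 < ρ →
      a₀ * ρ ^ ξ * (t ^ c * ρ ^ (β - ξ) * Real.exp (-(ρ ^ (2 - ξ)) / (K * t)))
        = (a₀ * t ^ c) * (ρ ^ (ξ + (β - ξ)) * Real.exp (-C * ρ ^ (2 - ξ))) := by
    intro ρ hρ
    rw [← hEarg, Real.rpow_add hρ]; ring
  have hD2 := deriv2_aux (a₀ * t ^ c) (ξ + (β - ξ)) C (2 - ξ)
      (fun ρ : ℝ => a₀ * ρ ^ ξ * (t ^ c * ρ ^ (β - ξ) * Real.exp (-(ρ ^ (2 - ξ)) / (K * t))))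
      hr hfg
      (ξ + (β - ξ) - 1) (β - ξ + 1) (β - ξ - (2 - ξ)) (β - ξ) (β - ξ) (β - ξ + (2 - ξ))
      (by ring) (by ring) (by ring) (by ring) (by ring) (by ring)
  -- spatial part, first derivative term
  have hfh : ∀ ρ : ℝ, 0 < ρ →
      β * a₀ * ρ ^ (ξ - 1) * (t ^ c * ρ ^ (β - ξ) * Real.exp (-(ρ ^ (2 - ξ)) / (K * t)))
        = (β * a₀ * t ^ c) * (ρ ^ (ξ - 1 + (β - ξ)) * Real.exp (-C * ρ ^ (2 - ξ))) := by
    intro ρ hρ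
    rw [← hEarg, Real.rpow_add hρ]; ring
  have hD1 := deriv_aux (β * a₀ * t ^ c) (ξ - 1 + (β - ξ)) C (2 - ξ)
      (fun ρ : ℝ => β * a₀ * ρ ^ (ξ - 1) * (t ^ c * ρ ^ (β - ξ) * Real.exp (-(ρ ^ (2 - ξ)) / (K * t))))
      hr hfh (β - ξ - (2 - ξ)) (β - ξ) (by ring) (by ring)
  rw [hLHS, hD2, hD1]
  rw [hEarg]
  rw [Real.rpow_sub hr (β - ξ) (2 - ξ), Real.rpow_add hr (β - ξ) (2 - ξ),
    Real.rpow_sub ht c 1, Real.rpow_one]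
  generalize Real.exp (-C * r ^ (2 - ξ)) = E
  generalize r ^ (β - ξ) = A
  generalize hM : r ^ (2 - ξ) = M
  have hMne : M ≠ 0 := by rw [← hM]; exact (Real.rpow_pos_of_pos hr _).ne'
  generalize t ^ c = T
  rw [hc, hC, hK]
  have h2ξ : ((2:ℝ) - ξ) ≠ 0 := hm'
  field_simp
  ring
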